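/- Let the symmetric group S_n act on P_n by letting w ∈ S_n send a point with I-components [a_i^I]_{i∈I} to the point whose w(I)-component is [a_{w^{-1}(j)}^I]_{j∈w(I)} for each nonempty I ⊆ [n]. Then: (1) Y_n is stable under this S_n-action; (2) a point p ∈ Y_n is fixed by the T_n-action if and only if its chain [n] = K_1 ⊋ ⋯ ⊋ K_{m+1} = ∅ is a complete flag, i.e. m = n and |K_ℓ| = n+1−ℓ for all ℓ; and (3) S_n acts simply transitively on the set of T_n-fixed points of Y_n (so there are exactly n! of them). -/

import Mathlib

noncomputable section

open Projectivization

instance projTopology {K V : Type*} [DivisionRing K] [AddCommGroup V] [Module K V]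
    [TopologicalSpace V] : TopologicalSpace (Projectivization K V) :=
  inferInstanceAs (TopologicalSpace (Quotient (projectivizationSetoid K V)))

/-- The index type of nonempty subsets of `ι`. -/
abbrev NES (ι : Type) := {I : Set ι // I.Nonempty}

/-- The ambient product `P = ∏_{∅ ≠ I ⊆ ι} ℙ^I` of projective spaces. -/
abbrev PSp (ι : Type) := (I : NES ι) → Projectivization ℂ (↥I.1 → ℂ)

/-- The subset of `ℙ^ι` consisting of points all of whose homogeneous coordinates
are nonzero (an algebraic torus). -/
def torusSet (ι : Type) : Set (Projectivization ℂ (ι → ℂ)) := {x | ∀ i, x.rep i ≠ 0}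

open Classical in
/-- The `i`-th homogeneous coordinate (for the chosen representative `rep`) of the
`K`-component of a point `p ∈ P`; junk value `0` if `i ∉ K` or `K = ∅`. -/
def pcoord (ι : Type) (p : PSp ι) (K : Set ι) (i : ι) : ℂ :=
  if h : K.Nonempty ∧ i ∈ K then (p ⟨K, h.1⟩).rep ⟨i, h.2⟩ else 0

lemma pcoord_exists_ne (ι : Type) (p : PSp ι) (K : Set ι) (hK : K.Nonempty) :
    ∃ i, i ∈ K ∧ pcoord ι p K i ≠ 0 := by
  obtain ⟨x, hx⟩ := Function.ne_iff.mp (Projectivization.rep_nonzero (p ⟨K, hK⟩))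
  refine ⟨x.1, x.2, ?_⟩
  rw [pcoord, dif_pos ⟨hK, x.2⟩]
  simpa using hx

/-- The map `ρ` from the torus to `P`, whose `I`-component is given by restricting
the homogeneous coordinates. -/
def rho (ι : Type) (x : ↥(torusSet ι)) : PSp ι := fun I =>
  Projectivization.mk ℂ (fun i : ↥I.1 => x.1.rep i.1) <| by
    obtain ⟨i, hi⟩ := I.2
    intro h0
    exact x.2 i (by simpa using congrFun h0 ⟨i, hi⟩)

/-- `Y`, the closure of `ρ(T)` in `P`. -/
def Yn (ι : Type) : Set (PSp ι) := closure (Set.range (rho ι))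

/-- The chain of a point `p ∈ P`: `chainK ι p 0 = univ` (this is `K₁` in the paper)
and `chainK ι p (ℓ+1)` (i.e. `K_{ℓ+2}`) consists of those `k ∈ chainK ι p ℓ` for which the
`k`-th homogeneous coordinate of the `chainK ι p ℓ`-component of `p` vanishes. -/
def chainK (ι : Type) (p : PSp ι) : ℕ → Set ι
  | 0 => Set.univ
  | ℓ + 1 => {k ∈ chainK ι p ℓ | pcoord ι p (chainK ι p ℓ) k = 0}

/-- A chain of subsets `ι = K 0 ⊋ K 1 ⊋ ⋯ ⊋ K m = ∅` (written `K₁ ⊋ ⋯ ⊋ K_{m+1}` in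
the paper); we extend it by `∅` beyond the `m`-th step so that it is determined by
the function `K`. -/
structure SubsetChain (ι : Type) where
  m : ℕ
  K : ℕ → Set ι
  first : K 0 = Set.univ
  strict : ∀ ℓ < m, K (ℓ + 1) ⊂ K ℓ
  last : K m = ∅
  beyond : ∀ ℓ, m ≤ ℓ → K ℓ = ∅

/-- The piece `O_{K₁,…,K_{m+1}}` of `Y`: those points of `Y` whose chain is the given one. -/
def Ochain (ι : Type) (c : SubsetChain ι) : Set (PSp ι) :=
  {p ∈ Yn ι | ∀ ℓ ≤ c.m, chainK ι p ℓ = c.K ℓ}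

/-- The subset `D_{K₁,…,K_{m+1}}` of `Y`: the points whose `K_ℓ`-component has vanishing
coordinates indexed by `K_{ℓ+1}`. -/
def Dchain (ι : Type) (c : SubsetChain ι) : Set (PSp ι) :=
  {p ∈ Yn ι | ∀ ℓ < c.m, ∀ k ∈ c.K (ℓ + 1), pcoord ι p (c.K ℓ) k = 0}

/-- The action of an element of the torus on a point of `P`:
`[a]·([b_i]_{i ∈ I})_I = ([a_i b_i]_{i ∈ I})_I`. -/
def act (ι : Type) (t : ↥(torusSet ι)) (p : PSp ι) : PSp ι := fun I =>
  Projectivization.mk ℂ (fun i : ↥I.1 => t.1.rep i.1 * (p I).rep i) <| by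
    intro h0
    obtain ⟨i, hi⟩ := Function.ne_iff.mp (Projectivization.rep_nonzero (p I))
    have h : t.1.rep i.1 * (p I).rep i = 0 := by simpa using congrFun h0 i
    exact mul_ne_zero (t.2 i.1) (by simpa using hi) h

/-- The action of a permutation `w` of `ι` on `P`: the `w(I)`-component of `w·p` is
`[a^I_{w⁻¹(j)}]_{j ∈ w(I)}`; equivalently the `J`-component of `w·p` is
`[a^{w⁻¹(J)}_{w⁻¹(j)}]_{j ∈ J}`. -/
def permAct (ι : Type) (w : Equiv.Perm ι) (p : PSp ι) : PSp ι := fun J =>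
  Projectivization.mk ℂ (fun j : ↥J.1 => pcoord ι p (⇑(w⁻¹) '' J.1) (w⁻¹ j.1)) <| by
    have hK : ((⇑(w⁻¹) : ι → ι) '' J.1).Nonempty := J.2.image _
    obtain ⟨i, hi, hne⟩ := pcoord_exists_ne ι p _ hK
    obtain ⟨j, hj, hji⟩ := hi
    intro h0
    apply hne
    have h := congrFun h0 ⟨j, hj⟩
    simpa [hji] using h


/-! ### Auxiliary lemmas -/

open Topology Filter

section Basic
set_option linter.unusedSectionVars false

variable {F W : Type*} [DivisionRing F] [AddCommGroup W] [Module F W] [TopologicalSpace W]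

/-- The canonical quotient map onto the projectivization. -/
def pmk (F : Type*) {W : Type*} [DivisionRing F] [AddCommGroup W] [Module F W]
    (v : {v : W // v ≠ 0}) : Projectivization F W :=
  Projectivization.mk F v.1 v.2

lemma isQuotientMap_pmk : IsQuotientMap (pmk F (W := W)) :=
  isQuotientMap_quotient_mk'

lemma continuous_pmk : Continuous (pmk F (W := W)) := isQuotientMap_pmk.continuous

lemma continuous_mk_comp {X : Type*} [TopologicalSpace X] {f : X → W} (hf : Continuous f)
    (h : ∀ x, f x ≠ 0) : Continuous (fun x => Projectivization.mk F (f x) (h x)) :=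
  continuous_pmk.comp (hf.subtype_mk h)

lemma mk_eq_mk_of_unit {v w : W} (hv : v ≠ 0) (hw : w ≠ 0) (a : Fˣ) (h : a • w = v) :
    Projectivization.mk F v hv = Projectivization.mk F w hw :=
  (Projectivization.mk_eq_mk_iff F v w hv hw).mpr ⟨a, h⟩

lemma exists_unit_smul_rep (v : W) (hv : v ≠ 0) :
    ∃ a : Fˣ, (Projectivization.mk F v hv).rep = a • v := by
  obtain ⟨a, ha⟩ := (Projectivization.mk_eq_mk_iff F _ v _ hv).mp
    (Projectivization.mk_rep (Projectivization.mk F v hv))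
  exact ⟨a, ha.symm⟩

lemma isOpenMap_pmk [ContinuousConstSMul F W] : IsOpenMap (pmk F (W := W)) := by
  intro U hU
  rw [← isQuotientMap_pmk.isOpen_preimage]
  have hcalc : ∀ (a : Fˣ) (v : {v : W // v ≠ 0}), (a : F) • v.1 ≠ 0 := fun a v =>
    smul_ne_zero a.ne_zero v.2
  have : pmk F ⁻¹' (pmk F '' U) =
      ⋃ a : Fˣ, (fun v : {v : W // v ≠ 0} => (⟨(a : F) • v.1, hcalc a v⟩ : {v : W // v ≠ 0})) ⁻¹' U := by
    ext v
    simp only [Set.mem_preimage, Set.mem_iUnion, Set.mem_image]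
    constructor
    · rintro ⟨u, hu, he⟩
      obtain ⟨a, ha⟩ := (Projectivization.mk_eq_mk_iff F u.1 v.1 u.2 v.2).mp he
      refine ⟨a, ?_⟩
      have : (⟨(a : F) • v.1, hcalc a v⟩ : {v : W // v ≠ 0}) = u := by
        apply Subtype.ext
        simpa [Units.smul_def] using ha
      rwa [this]
    · rintro ⟨a, ha⟩
      refine ⟨_, ha, ?_⟩
      exact mk_eq_mk_of_unit _ _ a (by simp [Units.smul_def])
  rw [this]
  refine isOpen_iUnion fun a => hU.preimage ?_
  exact Continuous.subtype_mk (continuous_const_smul _ |>.comp continuous_subtype_val) _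

end Basic

section Pcoord

variable {ι : Type}

lemma pcoord_eq (p : PSp ι) {K : Set ι} (hK : K.Nonempty) {i : ι} (hi : i ∈ K) :
    pcoord ι p K i = (p ⟨K, hK⟩).rep ⟨i, hi⟩ := by
  rw [pcoord, dif_pos ⟨hK, hi⟩]

lemma ind_ne_zero [DecidableEq ι] (I : NES ι) (k : ι) (hk : k ∈ I.1) :
    (fun i : ↥I.1 => if i.1 = k then (1:ℂ) else 0) ≠ 0 := fun h => by
  have := congrFun h ⟨k, hk⟩; simp at this

lemma pcoord_spec (p : PSp ι) {K : Set ι} (hK : K.Nonempty) (f : ↥K → ℂ) (hf : f ≠ 0)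
    (h : p ⟨K, hK⟩ = Projectivization.mk ℂ f hf) :
    ∃ a : ℂˣ, ∀ i (hi : i ∈ K), pcoord ι p K i = a * f ⟨i, hi⟩ := by
  obtain ⟨a, ha⟩ := exists_unit_smul_rep (F := ℂ) f hf
  refine ⟨a, fun i hi => ?_⟩
  rw [pcoord_eq p hK hi, h, ha]
  simp [Units.smul_def]

lemma pcoord_rho (x : ↥(torusSet ι)) {K : Set ι} (hK : K.Nonempty) :
    ∃ a : ℂˣ, ∀ i (hi : i ∈ K), pcoord ι (rho ι x) K i = a * x.1.rep i := by
  obtain ⟨a, ha⟩ := pcoord_spec (rho ι x) hK (fun i : ↥K => x.1.rep i.1)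
    (by intro h0; obtain ⟨i, hi⟩ := hK; exact x.2 i (by simpa using congrFun h0 ⟨i, hi⟩)) rfl
  exact ⟨a, fun i hi => ha i hi⟩

lemma isClosed_minorSet (I J : NES ι) (hIJ : I.1 ⊆ J.1) :
    IsClosed {p : PSp ι | ∀ i i' : ↥I.1,
      pcoord ι p J.1 i.1 * pcoord ι p I.1 i'.1 = pcoord ι p J.1 i'.1 * pcoord ι p I.1 i.1} := by
  classical
  set T : Set (Projectivization ℂ (↥J.1 → ℂ) × Projectivization ℂ (↥I.1 → ℂ)) :=
    {z | ∀ i i' : ↥I.1, z.1.rep ⟨i.1, hIJ i.2⟩ * z.2.rep i' = z.1.rep ⟨i'.1, hIJ i'.2⟩ * z.2.rep i}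
    with hTdef
  have keyJ : ∀ (p : PSp ι) (i : ↥I.1), pcoord ι p J.1 i.1 = (p J).rep ⟨i.1, hIJ i.2⟩ :=
    fun p i => pcoord_eq p J.2 (hIJ i.2)
  have keyI : ∀ (p : PSp ι) (i : ↥I.1), pcoord ι p I.1 i.1 = (p I).rep i :=
    fun p i => pcoord_eq p I.2 i.2
  have hset : {p : PSp ι | ∀ i i' : ↥I.1,
      pcoord ι p J.1 i.1 * pcoord ι p I.1 i'.1 = pcoord ι p J.1 i'.1 * pcoord ι p I.1 i.1}
      = (fun p : PSp ι => (p J, p I)) ⁻¹' T := by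
    ext p
    constructor
    · intro h i i'
      have := h i i'
      rwa [keyJ p i, keyJ p i', keyI p i, keyI p i'] at this
    · intro h i i'
      have := h i i'
      rwa [← keyJ p i, ← keyJ p i', ← keyI p i, ← keyI p i'] at this
  rw [hset]
  refine IsClosed.preimage (by fun_prop) ?_
  -- T is closed, via the quotient map
  set q : {v : ↥J.1 → ℂ // v ≠ 0} × {v : ↥I.1 → ℂ // v ≠ 0} →
      Projectivization ℂ (↥J.1 → ℂ) × Projectivization ℂ (↥I.1 → ℂ) :=
    Prod.map (pmk ℂ) (pmk ℂ) with hq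
  have hsurj : Function.Surjective q := by
    rintro ⟨x, y⟩
    exact ⟨(⟨x.rep, Projectivization.rep_nonzero x⟩, ⟨y.rep, Projectivization.rep_nonzero y⟩),
      Prod.ext (Projectivization.mk_rep x) (Projectivization.mk_rep y)⟩
  have hqm : IsQuotientMap q :=
    (isOpenMap_pmk.prodMap isOpenMap_pmk).isQuotientMap
      (continuous_pmk.prodMap continuous_pmk) hsurj
  rw [← hqm.isClosed_preimage]
  have hpre : q ⁻¹' T = {z : {v : ↥J.1 → ℂ // v ≠ 0} × {v : ↥I.1 → ℂ // v ≠ 0} |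
      ∀ i i' : ↥I.1, z.1.1 ⟨i.1, hIJ i.2⟩ * z.2.1 i' = z.1.1 ⟨i'.1, hIJ i'.2⟩ * z.2.1 i} := by
    ext ⟨v, u⟩
    obtain ⟨a, ha⟩ := exists_unit_smul_rep (F := ℂ) v.1 v.2
    obtain ⟨b, hb⟩ := exists_unit_smul_rep (F := ℂ) u.1 u.2
    have hrepv : (q (v, u)).1.rep = fun j => (a : ℂ) * v.1 j := by
      rw [hq]; show (Projectivization.mk ℂ v.1 v.2).rep = _
      rw [ha]; funext j; simp [Units.smul_def]
    have hrepu : (q (v, u)).2.rep = fun j => (b : ℂ) * u.1 j := by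
      rw [hq]; show (Projectivization.mk ℂ u.1 u.2).rep = _
      rw [hb]; funext j; simp [Units.smul_def]
    simp only [Set.mem_preimage, hTdef, Set.mem_setOf_eq, hrepv, hrepu]
    constructor
    · intro h i i'
      have := h i i'
      have hab : (a : ℂ) * (b : ℂ) ≠ 0 := mul_ne_zero a.ne_zero b.ne_zero
      apply mul_left_cancel₀ hab
      calc (a:ℂ) * (b:ℂ) * (v.1 ⟨i.1, hIJ i.2⟩ * u.1 i')
          = (a:ℂ) * v.1 ⟨i.1, hIJ i.2⟩ * ((b:ℂ) * u.1 i') := by ring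
        _ = (a:ℂ) * v.1 ⟨i'.1, hIJ i'.2⟩ * ((b:ℂ) * u.1 i) := this
        _ = (a:ℂ) * (b:ℂ) * (v.1 ⟨i'.1, hIJ i'.2⟩ * u.1 i) := by ring
    · intro h i i'
      have := h i i'
      calc (a:ℂ) * v.1 ⟨i.1, hIJ i.2⟩ * ((b:ℂ) * u.1 i')
          = (a:ℂ) * (b:ℂ) * (v.1 ⟨i.1, hIJ i.2⟩ * u.1 i') := by ring
        _ = (a:ℂ) * (b:ℂ) * (v.1 ⟨i'.1, hIJ i'.2⟩ * u.1 i) := by rw [this]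
        _ = (a:ℂ) * v.1 ⟨i'.1, hIJ i'.2⟩ * ((b:ℂ) * u.1 i) := by ring
  rw [hpre, Set.setOf_forall]
  refine isClosed_iInter fun i => ?_
  rw [Set.setOf_forall]
  refine isClosed_iInter fun i' => ?_
  have c1 : ∀ j : ↥J.1, Continuous fun z : {v : ↥J.1 → ℂ // v ≠ 0} × {v : ↥I.1 → ℂ // v ≠ 0} =>
      z.1.1 j := fun j => (continuous_apply j).comp (continuous_subtype_val.comp continuous_fst)
  have c2 : ∀ j : ↥I.1, Continuous fun z : {v : ↥J.1 → ℂ // v ≠ 0} × {v : ↥I.1 → ℂ // v ≠ 0} =>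
      z.2.1 j := fun j => (continuous_apply j).comp (continuous_subtype_val.comp continuous_snd)
  exact isClosed_eq ((c1 _).mul (c2 _)) ((c1 _).mul (c2 _))

lemma yn_minor {p : PSp ι} (hp : p ∈ Yn ι) (I J : NES ι) (hIJ : I.1 ⊆ J.1) :
    ∀ i i' : ↥I.1,
      pcoord ι p J.1 i.1 * pcoord ι p I.1 i'.1 = pcoord ι p J.1 i'.1 * pcoord ι p I.1 i.1 := by
  refine closure_minimal ?_ (isClosed_minorSet I J hIJ) hp
  rintro _ ⟨x, rfl⟩ i i'
  obtain ⟨a, ha⟩ := pcoord_rho x J.2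
  obtain ⟨b, hb⟩ := pcoord_rho x I.2
  rw [ha i.1 (hIJ i.2), ha i'.1 (hIJ i'.2), hb i.1 i.2, hb i'.1 i'.2]
  ring

lemma point_eq_single [DecidableEq ι] (p : PSp ι) (I : NES ι) (k : ι) (hk : k ∈ I.1)
    (h0 : ∀ i ∈ I.1, i ≠ k → pcoord ι p I.1 i = 0) :
    p I = Projectivization.mk ℂ (fun i : ↥I.1 => if i.1 = k then 1 else 0) (ind_ne_zero I k hk) := by
  have hzero : ∀ i : ↥I.1, i.1 ≠ k → (p I).rep i = 0 := by
    intro i hik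
    have := h0 i.1 i.2 hik
    rwa [pcoord_eq p I.2 i.2] at this
  have hrk : (p I).rep ⟨k, hk⟩ ≠ 0 := by
    intro h
    apply Projectivization.rep_nonzero (p I)
    funext i
    by_cases hik : i.1 = k
    · have : i = ⟨k, hk⟩ := Subtype.ext hik
      rw [this, h]; rfl
    · exact hzero i hik
  conv_lhs => rw [← Projectivization.mk_rep (p I)]
  refine mk_eq_mk_of_unit _ _ (Units.mk0 _ hrk) ?_
  funext i
  by_cases hik : i.1 = k
  · have : i = ⟨k, hk⟩ := Subtype.ext hik
    rw [this]
    simp [Units.smul_def]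
  · simp [Units.smul_def, hik, hzero i hik]

end Pcoord

section Fixed

variable {ι : Type}

lemma mem_torus_mk (v : ι → ℂ) (hv : v ≠ 0) (hvi : ∀ i, v i ≠ 0) :
    Projectivization.mk ℂ v hv ∈ torusSet ι := by
  intro i
  obtain ⟨a, ha⟩ := exists_unit_smul_rep (F := ℂ) v hv
  rw [ha]
  simpa [Units.smul_def] using fun h => (hvi i h).elim

lemma single_of_fixed (p : PSp ι) (hfix : ∀ t : ↥(torusSet ι), act ι t p = p) (I : NES ι) :
    ∃ k, ∃ hk : k ∈ I.1, pcoord ι p I.1 k ≠ 0 ∧ ∀ i ∈ I.1, i ≠ k → pcoord ι p I.1 i = 0 := by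
  classical
  obtain ⟨k, hk, hkne⟩ := pcoord_exists_ne ι p I.1 I.2
  refine ⟨k, hk, hkne, ?_⟩
  intro j hj hjk
  by_contra hne
  set v : ι → ℂ := fun i => if i = k then 2 else 1 with hvdef
  have hv : v ≠ 0 := fun h => by have := congrFun h k; simp [hvdef] at this
  have hvi : ∀ i, v i ≠ 0 := by
    intro i; by_cases h : i = k <;> simp [hvdef, h]
  obtain ⟨a, ha⟩ := exists_unit_smul_rep (F := ℂ) v hv
  set t : ↥(torusSet ι) := ⟨Projectivization.mk ℂ v hv, mem_torus_mk v hv hvi⟩ with htdef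
  have h2 : act ι t p I = p I := congrFun (hfix t) I
  simp only [act] at h2
  have h3 := h2.trans (Projectivization.mk_rep (p I)).symm
  obtain ⟨c, hc⟩ := (Projectivization.mk_eq_mk_iff ℂ _ _ _ _).mp h3
  have hrepa : ∀ i : ι, t.1.rep i = (a : ℂ) * v i := by
    intro i
    have : t.1.rep = a • v := ha
    rw [this]; simp [Units.smul_def]
  have hk2 := congrFun hc ⟨k, hk⟩
  have hj2 := congrFun hc ⟨j, hj⟩
  simp only [Units.smul_def, Pi.smul_apply, smul_eq_mul, hrepa] at hk2 hj2
  have hrk : (p I).rep ⟨k, hk⟩ ≠ 0 := by rwa [pcoord_eq p I.2 hk] at hkne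
  have hrj : (p I).rep ⟨j, hj⟩ ≠ 0 := by
    intro h; apply hne; rw [pcoord_eq p I.2 hj]; exact h
  have hck : (c : ℂ) = (a : ℂ) * 2 := by
    have := mul_right_cancel₀ hrk hk2
    simpa [hvdef] using this
  have hcj : (c : ℂ) = (a : ℂ) := by
    have := mul_right_cancel₀ hrj hj2
    simpa [hvdef, hjk] using this
  have : (a : ℂ) = 0 := by
    have h4 : (a : ℂ) * 2 = (a : ℂ) := hck ▸ hcj ▸ rfl
    linear_combination h4
  exact a.ne_zero this

lemma act_fixed [DecidableEq ι] (p : PSp ι) (h : ∀ I : NES ι, ∃ k, ∃ hk : k ∈ I.1,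
    p I = Projectivization.mk ℂ (fun i : ↥I.1 => if i.1 = k then 1 else 0) (ind_ne_zero I k hk)) :
    ∀ t : ↥(torusSet ι), act ι t p = p := by
  intro t; funext I
  obtain ⟨k, hk, hpI⟩ := h I
  obtain ⟨b, hb⟩ := exists_unit_smul_rep (F := ℂ)
    (fun i : ↥I.1 => if i.1 = k then (1:ℂ) else 0) (ind_ne_zero I k hk)
  have hrep : (p I).rep = fun i : ↥I.1 => (b : ℂ) * (if i.1 = k then 1 else 0) := by
    rw [hpI, hb]; funext i; simp [Units.smul_def]
  simp only [act]
  conv_rhs => rw [hpI]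
  refine mk_eq_mk_of_unit _ _ (Units.mk0 (t.1.rep k * (b : ℂ))
    (mul_ne_zero (t.2 k) b.ne_zero)) ?_
  funext i
  simp only [Units.smul_def, Pi.smul_apply, smul_eq_mul, Units.val_mk0]
  rw [hrep]
  by_cases hik : i.1 = k
  · simp [hik]
  · simp [hik]

end Fixed

section Chain

variable {n : ℕ}

lemma chainK_succ_subset (p : PSp (Fin n)) (ℓ : ℕ) :
    chainK (Fin n) p (ℓ + 1) ⊆ chainK (Fin n) p ℓ := fun _ hk => hk.1

lemma chainK_subset_of_le (p : PSp (Fin n)) {ℓ ℓ' : ℕ} (h : ℓ ≤ ℓ') :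
    chainK (Fin n) p ℓ' ⊆ chainK (Fin n) p ℓ := by
  induction ℓ' with
  | zero => rw [Nat.le_zero.mp h]
  | succ m ih =>
      by_cases h' : ℓ = m + 1
      · rw [h']
      · exact (chainK_succ_subset p m).trans (ih (by omega))

lemma chainK_step (p : PSp (Fin n)) (hfix : ∀ t : ↥(torusSet (Fin n)), act (Fin n) t p = p)
    (ℓ : ℕ) (hne : (chainK (Fin n) p ℓ).Nonempty) :
    ∃ k ∈ chainK (Fin n) p ℓ, chainK (Fin n) p (ℓ + 1) = chainK (Fin n) p ℓ \ {k} := by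
  obtain ⟨k, hk, hkne, hvan⟩ := single_of_fixed p hfix ⟨chainK (Fin n) p ℓ, hne⟩
  refine ⟨k, hk, ?_⟩
  ext i
  constructor
  · rintro ⟨hi, hz⟩
    exact ⟨hi, fun h => hkne (by rwa [Set.mem_singleton_iff.mp h] at hz)⟩
  · rintro ⟨hi, hik⟩
    exact ⟨hi, hvan i hi (fun h => hik (Set.mem_singleton_iff.mpr h))⟩

lemma chainK_card_of_fixed (p : PSp (Fin n))
    (hfix : ∀ t : ↥(torusSet (Fin n)), act (Fin n) t p = p) :
    ∀ ℓ ≤ n, (chainK (Fin n) p ℓ).ncard = n - ℓ := by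
  intro ℓ
  induction ℓ with
  | zero => intro _; simp [chainK, Set.ncard_univ]
  | succ ℓ ih =>
      intro hℓ
      have h1 : (chainK (Fin n) p ℓ).ncard = n - ℓ := ih (by omega)
      have hne : (chainK (Fin n) p ℓ).Nonempty := by
        rw [← Set.ncard_pos (Set.toFinite _)]
        omega
      obtain ⟨k, hk, hstep⟩ := chainK_step p hfix ℓ hne
      rw [hstep, Set.ncard_diff_singleton_of_mem hk, h1]
      omega

lemma exists_kstar (p : PSp (Fin n))
    (hcard : ∀ ℓ ≤ n, (chainK (Fin n) p ℓ).ncard = n - ℓ) (ℓ : ℕ) (hℓ : ℓ < n) :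
    ∃ k, chainK (Fin n) p ℓ \ chainK (Fin n) p (ℓ + 1) = {k} := by
  have h1 := hcard ℓ (by omega)
  have h2 := hcard (ℓ + 1) (by omega)
  have hd := Set.ncard_diff (chainK_succ_subset p ℓ) (Set.toFinite _)
  rw [h1, h2] at hd
  exact Set.ncard_eq_one.mp (by rw [hd]; omega)

lemma component_single_of_card (p : PSp (Fin n)) (hp : p ∈ Yn (Fin n))
    (hcard : ∀ ℓ ≤ n, (chainK (Fin n) p ℓ).ncard = n - ℓ) (I : NES (Fin n)) :
    ∃ ℓ < n, ∃ k, (chainK (Fin n) p ℓ \ chainK (Fin n) p (ℓ + 1) = {k}) ∧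
      ∃ hk : k ∈ I.1, I.1 ⊆ chainK (Fin n) p ℓ ∧ ¬ I.1 ⊆ chainK (Fin n) p (ℓ + 1) ∧
      p I = Projectivization.mk ℂ (fun i : ↥I.1 => if i.1 = k then 1 else 0)
        (ind_ne_zero I k hk) := by
  classical
  have hKn : chainK (Fin n) p n = ∅ := by
    rw [← Set.ncard_eq_zero (Set.toFinite _)]
    rw [hcard n le_rfl]; omega
  have hex : ∃ ℓ, ¬ I.1 ⊆ chainK (Fin n) p ℓ := by
    refine ⟨n, fun h => ?_⟩
    obtain ⟨i, hi⟩ := I.2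
    have := h hi
    rw [hKn] at this
    exact this
  have hm := Nat.find_spec hex
  have hm0 : Nat.find hex ≠ 0 := by
    intro h
    rw [h] at hm
    exact hm (by simp [chainK])
  obtain ⟨ℓ, hℓeq⟩ : ∃ ℓ, Nat.find hex = ℓ + 1 := ⟨Nat.find hex - 1, by omega⟩
  rw [hℓeq] at hm
  have hsub : I.1 ⊆ chainK (Fin n) p ℓ := by
    by_contra h
    exact Nat.find_min hex (by omega) h
  have hℓn : ℓ < n := by
    by_contra h
    obtain ⟨i, hi⟩ := I.2
    have : i ∈ chainK (Fin n) p n := chainK_subset_of_le p (by omega) (hsub hi)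
    rw [hKn] at this
    exact this
  obtain ⟨k, hk⟩ := exists_kstar p hcard ℓ hℓn
  obtain ⟨i₀, hi₀I, hi₀n⟩ := Set.not_subset.mp hm
  have hi₀k : i₀ = k := by
    have : i₀ ∈ chainK (Fin n) p ℓ \ chainK (Fin n) p (ℓ + 1) := ⟨hsub hi₀I, hi₀n⟩
    rwa [hk] at this
  have hkI : k ∈ I.1 := hi₀k ▸ hi₀I
  have hkmem : k ∈ chainK (Fin n) p ℓ \ chainK (Fin n) p (ℓ + 1) := by
    rw [hk]; rfl
  have hnz : pcoord (Fin n) p (chainK (Fin n) p ℓ) k ≠ 0 :=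
    fun h => hkmem.2 ⟨hkmem.1, h⟩
  have hKℓne : (chainK (Fin n) p ℓ).Nonempty := I.2.mono hsub
  have hvan : ∀ i ∈ I.1, i ≠ k → pcoord (Fin n) p I.1 i = 0 := by
    intro i hiI hik
    have hi1 : i ∈ chainK (Fin n) p (ℓ + 1) := by
      by_contra h
      have : i ∈ ({k} : Set (Fin n)) := by rw [← hk]; exact ⟨hsub hiI, h⟩
      exact hik this
    have hz : pcoord (Fin n) p (chainK (Fin n) p ℓ) i = 0 := hi1.2
    have hmin := yn_minor hp I ⟨chainK (Fin n) p ℓ, hKℓne⟩ hsub ⟨k, hkI⟩ ⟨i, hiI⟩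
    simp only at hmin
    rw [hz, zero_mul] at hmin
    rcases mul_eq_zero.mp hmin with h | h
    · exact (hnz h).elim
    · exact h
  exact ⟨ℓ, hℓn, k, hk, hkI, hsub, fun h => hi₀n (hi₀k ▸ h hkI) , point_eq_single p I k hkI hvan⟩

end Chain

section Std

variable {n : ℕ}

/-- The element of `I` at which `u⁻¹` is minimal. -/
def minElt (u : Equiv.Perm (Fin n)) (I : NES (Fin n)) : Fin n :=
  (Set.exists_min_image I.1 (fun i => u⁻¹ i) (Set.toFinite _) I.2).choose

lemma minElt_mem (u : Equiv.Perm (Fin n)) (I : NES (Fin n)) : minElt u I ∈ I.1 :=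
  (Set.exists_min_image I.1 (fun i => u⁻¹ i) (Set.toFinite _) I.2).choose_spec.1

lemma minElt_min (u : Equiv.Perm (Fin n)) (I : NES (Fin n)) :
    ∀ i ∈ I.1, u⁻¹ (minElt u I) ≤ u⁻¹ i :=
  (Set.exists_min_image I.1 (fun i => u⁻¹ i) (Set.toFinite _) I.2).choose_spec.2

lemma minElt_unique (u : Equiv.Perm (Fin n)) (I : NES (Fin n)) {k : Fin n} (hk : k ∈ I.1)
    (hmin : ∀ i ∈ I.1, u⁻¹ k ≤ u⁻¹ i) : k = minElt u I :=
  (u⁻¹ : Equiv.Perm (Fin n)).injective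
    (le_antisymm (hmin _ (minElt_mem u I)) (minElt_min u I k hk))

/-- The torus-fixed point of `Y_n` associated with a permutation. -/
def stdPoint (u : Equiv.Perm (Fin n)) : PSp (Fin n) := fun I =>
  Projectivization.mk ℂ (fun i : ↥I.1 => if i.1 = minElt u I then 1 else 0)
    (ind_ne_zero I _ (minElt_mem u I))

lemma stdPoint_fixed (u : Equiv.Perm (Fin n)) :
    ∀ t : ↥(torusSet (Fin n)), act (Fin n) t (stdPoint u) = stdPoint u :=
  act_fixed _ (fun I => ⟨minElt u I, minElt_mem u I, rfl⟩)

lemma stdPoint_injective : Function.Injective (stdPoint (n := n)) := by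
  intro u u' h
  have hmin : ∀ I : NES (Fin n), minElt u I = minElt u' I := by
    intro I
    have hI := congrFun h I
    rw [stdPoint, stdPoint] at hI
    obtain ⟨a, ha⟩ := (Projectivization.mk_eq_mk_iff ℂ _ _ _ _).mp hI
    by_contra hne
    have := congrFun ha ⟨minElt u I, minElt_mem u I⟩
    simp [Units.smul_def, hne] at this
  suffices H : ∀ m : ℕ, ∀ ℓ : Fin n, ℓ.1 = m → u ℓ = u' ℓ from
    Equiv.ext fun ℓ => H ℓ.1 ℓ rfl
  intro m
  induction m using Nat.strong_induction_on with
  | _ m IH =>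
    intro ℓ hℓ
    set I : Set (Fin n) := {i | ℓ ≤ u⁻¹ i} with hI
    have hmem : u ℓ ∈ I := by simp [hI]
    have hIne : I.Nonempty := ⟨u ℓ, hmem⟩
    have hIeq : ∀ i, i ∈ I ↔ ℓ ≤ u'⁻¹ i := by
      intro i
      simp only [hI, Set.mem_setOf_eq]
      constructor
      · intro hle
        by_contra hlt
        push_neg at hlt
        have hIH := IH (u'⁻¹ i).1 (by rw [← hℓ]; exact hlt) (u'⁻¹ i) rfl
        have hi : u (u'⁻¹ i) = i := by rw [hIH]; simp
        have heq : u⁻¹ i = u'⁻¹ i := by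
          conv_lhs => rw [← hi]
          simp
        rw [heq] at hle
        exact absurd hle (not_le.mpr hlt)
      · intro hle
        by_contra hlt
        push_neg at hlt
        have hIH := IH (u⁻¹ i).1 (by rw [← hℓ]; exact hlt) (u⁻¹ i) rfl
        have hi : u' (u⁻¹ i) = i := by rw [← hIH]; simp
        have heq : u'⁻¹ i = u⁻¹ i := by
          conv_lhs => rw [← hi]
          simp
        rw [heq] at hle
        exact absurd hle (not_le.mpr hlt)
    have h1 : u ℓ = minElt u ⟨I, hIne⟩ :=
      minElt_unique u ⟨I, hIne⟩ hmem (by intro i hi; simpa [hI] using hi)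
    have h2 : u' ℓ = minElt u' ⟨I, hIne⟩ :=
      minElt_unique u' ⟨I, hIne⟩ (by rw [hIeq]; simp) (fun i hi => by simpa using (hIeq i).mp hi)
    rw [h1, h2, hmin]

end Std

section StdMem

variable {n : ℕ}

lemma ord_min_le (u : Equiv.Perm (Fin n)) (I : NES (Fin n)) {i : Fin n} (hi : i ∈ I.1) :
    ((u⁻¹ (minElt u I) : Fin n) : ℕ) ≤ ((u⁻¹ i : Fin n) : ℕ) :=
  minElt_min u I i hi

lemma stdPoint_mem_Yn (hn : 0 < n) (u : Equiv.Perm (Fin n)) : stdPoint u ∈ Yn (Fin n) := by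
  set ord : Fin n → ℕ := fun k => ((u⁻¹ k : Fin n) : ℕ) with hord
  have hgne : ∀ (I : NES (Fin n)) (s : ℝ),
      (fun i : ↥I.1 => ((s : ℂ) ^ (ord i.1 - ord (minElt u I)))) ≠ 0 := by
    intro I s h
    have := congrFun h ⟨minElt u I, minElt_mem u I⟩
    simp at this
  set R : ℝ → PSp (Fin n) := fun s I =>
    Projectivization.mk ℂ (fun i : ↥I.1 => ((s : ℂ) ^ (ord i.1 - ord (minElt u I))))
      (hgne I s) with hRdef
  have hR0 : R 0 = stdPoint u := by
    funext I
    refine mk_eq_mk_of_unit _ _ 1 ?_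
    funext i
    rw [one_smul]
    by_cases h : i.1 = minElt u I
    · simp [h]
    · have h1 : ord (minElt u I) ≤ ord i.1 := ord_min_le u I i.2
      have h2 : ord i.1 ≠ ord (minElt u I) := by
        intro he
        apply h
        have : u⁻¹ i.1 = u⁻¹ (minElt u I) := Fin.val_injective he
        exact (u⁻¹ : Equiv.Perm (Fin n)).injective this
      have h3 : ord i.1 - ord (minElt u I) ≠ 0 := by omega
      simp [h, zero_pow h3]
  have hcont : Continuous R := by
    refine continuous_pi fun I => continuous_mk_comp ?_ _
    refine continuous_pi fun i => ?_
    exact (Complex.continuous_ofReal).pow _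
  have htend : Filter.Tendsto R (𝓝[≠] (0 : ℝ)) (𝓝 (stdPoint u)) := by
    rw [← hR0]
    exact (hcont.tendsto 0).mono_left nhdsWithin_le_nhds
  rw [Yn]
  refine mem_closure_of_tendsto htend ?_
  filter_upwards [self_mem_nhdsWithin] with s hs
  have hsC : (s : ℂ) ≠ 0 := Complex.ofReal_ne_zero.mpr hs
  set v : Fin n → ℂ := fun k => (s : ℂ) ^ ord k with hv
  have hvi : ∀ k, v k ≠ 0 := fun k => pow_ne_zero _ hsC
  have hvne : v ≠ 0 := fun h => hvi ⟨0, hn⟩ (congrFun h _)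
  refine ⟨⟨Projectivization.mk ℂ v hvne, mem_torus_mk v hvne hvi⟩, ?_⟩
  funext I
  obtain ⟨a, ha⟩ := exists_unit_smul_rep (F := ℂ) v hvne
  simp only [rho, hRdef]
  have step1 : Projectivization.mk ℂ
      (fun i : ↥I.1 => (Projectivization.mk ℂ v hvne).rep i.1)
      (by intro h0; obtain ⟨i, hi⟩ := I.2; exact
        (⟨Projectivization.mk ℂ v hvne, mem_torus_mk v hvne hvi⟩ :
          ↥(torusSet (Fin n))).2 i (by simpa using congrFun h0 ⟨i, hi⟩)) =
      Projectivization.mk ℂ (fun i : ↥I.1 => v i.1)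
        (fun h0 => hvi (minElt u I) (by simpa using congrFun h0 ⟨minElt u I, minElt_mem u I⟩)) := by
    refine mk_eq_mk_of_unit _ _ a ?_
    funext i
    rw [ha]
    simp [Units.smul_def]
  refine step1.trans ?_
  refine mk_eq_mk_of_unit _ _ (Units.mk0 ((s:ℂ) ^ ord (minElt u I)) (pow_ne_zero _ hsC)) ?_
  funext i
  simp only [Units.smul_def, Pi.smul_apply, smul_eq_mul, Units.val_mk0, hv]
  rw [← pow_add]
  congr 1
  have h : ord (minElt u I) ≤ ord i.1 := ord_min_le u I i.2
  omega

end StdMem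

section Perm

variable {n : ℕ}

def preim (w : Equiv.Perm (Fin n)) (J : NES (Fin n)) : NES (Fin n) :=
  ⟨(⇑(w⁻¹) : Fin n → Fin n) '' J.1, J.2.image _⟩

lemma mem_preim (w : Equiv.Perm (Fin n)) (J : NES (Fin n)) (j : ↥J.1) :
    w⁻¹ j.1 ∈ (preim w J).1 := ⟨j.1, j.2, rfl⟩

def pvec (w : Equiv.Perm (Fin n)) (J : NES (Fin n)) (f : ↥(preim w J).1 → ℂ) : ↥J.1 → ℂ :=
  fun j => f ⟨w⁻¹ j.1, mem_preim w J j⟩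

lemma pvec_ne (w : Equiv.Perm (Fin n)) (J : NES (Fin n)) (f : ↥(preim w J).1 → ℂ)
    (hf : f ≠ 0) : pvec w J f ≠ 0 := by
  intro h0
  apply hf
  funext k
  obtain ⟨j, hj, hjk⟩ := k.2
  have h := congrFun h0 ⟨j, hj⟩
  have hk : (⟨w⁻¹ j, mem_preim w J ⟨j, hj⟩⟩ : ↥(preim w J).1) = k := Subtype.ext hjk
  rw [pvec] at h
  rw [← hk]
  exact h

lemma pvec_smul (w : Equiv.Perm (Fin n)) (J : NES (Fin n)) (a : ℂ)
    (f : ↥(preim w J).1 → ℂ) : pvec w J (a • f) = a • pvec w J f := rfl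

def pPhi (w : Equiv.Perm (Fin n)) (J : NES (Fin n))
    (x : Projectivization ℂ (↥(preim w J).1 → ℂ)) : Projectivization ℂ (↥J.1 → ℂ) :=
  Projectivization.mk ℂ (pvec w J x.rep) (pvec_ne w J _ (Projectivization.rep_nonzero x))

lemma pPhi_mk (w : Equiv.Perm (Fin n)) (J : NES (Fin n)) (f : ↥(preim w J).1 → ℂ)
    (hf : f ≠ 0) : pPhi w J (Projectivization.mk ℂ f hf) =
      Projectivization.mk ℂ (pvec w J f) (pvec_ne w J f hf) := by
  obtain ⟨a, ha⟩ := exists_unit_smul_rep (F := ℂ) f hf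
  rw [pPhi]
  refine mk_eq_mk_of_unit _ _ a ?_
  show (a : ℂ) • pvec w J f = _
  rw [← pvec_smul, ha]
  rfl

lemma pPhi_continuous (w : Equiv.Perm (Fin n)) (J : NES (Fin n)) :
    Continuous (pPhi w J) := by
  rw [isQuotientMap_pmk.continuous_iff]
  have heq : pPhi w J ∘ pmk ℂ = fun v : {v : ↥(preim w J).1 → ℂ // v ≠ 0} =>
      Projectivization.mk ℂ (pvec w J v.1) (pvec_ne w J v.1 v.2) :=
    funext fun v => pPhi_mk w J v.1 v.2
  rw [heq]
  exact continuous_mk_comp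
    (continuous_pi fun j => (continuous_apply _).comp continuous_subtype_val) _

lemma permAct_apply (w : Equiv.Perm (Fin n)) (p : PSp (Fin n)) (J : NES (Fin n)) :
    permAct (Fin n) w p J = pPhi w J (p (preim w J)) := by
  have hvec : (fun j : ↥J.1 => pcoord (Fin n) p (⇑(w⁻¹) '' J.1) (w⁻¹ j.1)) =
      pvec w J ((p (preim w J)).rep) := by
    funext j
    exact pcoord_eq p (preim w J).2 (mem_preim w J j)
  simp only [permAct, pPhi]
  exact mk_eq_mk_of_unit _ _ 1 (by rw [one_smul, hvec])

lemma permAct_continuous (w : Equiv.Perm (Fin n)) : Continuous (permAct (Fin n) w) := by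
  have heq : permAct (Fin n) w = fun p J => pPhi w J (p (preim w J)) :=
    funext fun p => funext fun J => permAct_apply w p J
  rw [heq]
  exact continuous_pi fun J => (pPhi_continuous w J).comp (continuous_apply _)

lemma permAct_rho (w : Equiv.Perm (Fin n)) (t : ↥(torusSet (Fin n))) :
    ∃ t', permAct (Fin n) w (rho (Fin n) t) = rho (Fin n) t' := by
  set v : Fin n → ℂ := fun i => t.1.rep (w⁻¹ i) with hv
  have hvi : ∀ i, v i ≠ 0 := fun i => t.2 _
  have hvne : v ≠ 0 := fun h =>
    Projectivization.rep_nonzero t.1 (funext fun i => by simpa [hv] using congrFun h (w i))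
  refine ⟨⟨Projectivization.mk ℂ v hvne, mem_torus_mk v hvne hvi⟩, ?_⟩
  funext J
  rw [permAct_apply]
  obtain ⟨a, ha⟩ := exists_unit_smul_rep (F := ℂ) v hvne
  simp only [rho]
  rw [pPhi_mk]
  refine mk_eq_mk_of_unit _ _ a⁻¹ ?_
  funext j
  show (a⁻¹ : ℂˣ) • ((Projectivization.mk ℂ v hvne).rep j.1) = _
  rw [ha]
  simp [Units.smul_def, pvec, hv]

lemma permAct_preserves_Yn (w : Equiv.Perm (Fin n)) :
    ∀ p ∈ Yn (Fin n), permAct (Fin n) w p ∈ Yn (Fin n) := by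
  intro p hp
  have h1 : permAct (Fin n) w '' (Yn (Fin n)) ⊆
      closure (permAct (Fin n) w '' Set.range (rho (Fin n))) :=
    image_closure_subset_closure_image (permAct_continuous w)
  have h2 : permAct (Fin n) w '' Set.range (rho (Fin n)) ⊆ Set.range (rho (Fin n)) := by
    rintro _ ⟨_, ⟨t, rfl⟩, rfl⟩
    obtain ⟨t', ht'⟩ := permAct_rho w t
    exact ⟨t', ht'.symm⟩
  exact closure_mono h2 (h1 (Set.mem_image_of_mem _ hp))

lemma minElt_preim (w u : Equiv.Perm (Fin n)) (J : NES (Fin n)) :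
    minElt u (preim w J) = w⁻¹ (minElt (w * u) J) := by
  refine (minElt_unique u (preim w J) ⟨minElt (w * u) J, minElt_mem (w * u) J, rfl⟩ ?_).symm
  rintro _ ⟨j, hj, rfl⟩
  have h1 := minElt_min (w * u) J j hj
  simpa [mul_inv_rev, Equiv.Perm.mul_apply] using h1

lemma permAct_stdPoint (w u : Equiv.Perm (Fin n)) :
    permAct (Fin n) w (stdPoint u) = stdPoint (w * u) := by
  funext J
  rw [permAct_apply]
  simp only [stdPoint]
  rw [pPhi_mk]
  refine mk_eq_mk_of_unit _ _ 1 ?_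
  rw [one_smul]
  funext j
  have hr : pvec w J (fun i : ↥(preim w J).1 =>
      if i.1 = minElt u (preim w J) then (1:ℂ) else 0) j =
      (if (w⁻¹ j.1 : Fin n) = minElt u (preim w J) then (1:ℂ) else 0) := rfl
  rw [hr, minElt_preim w u J]
  by_cases h : j.1 = minElt (w * u) J
  · simp [h]
  · have hne : (w⁻¹ j.1 : Fin n) ≠ w⁻¹ (minElt (w * u) J) := fun he => h (w⁻¹.injective he)
    simp [h, hne]

lemma fixed_eq_stdPoint (p : PSp (Fin n)) (hp : p ∈ Yn (Fin n))
    (hcard : ∀ ℓ ≤ n, (chainK (Fin n) p ℓ).ncard = n - ℓ) :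
    ∃ u : Equiv.Perm (Fin n), p = stdPoint u := by
  set kf : Fin n → Fin n := fun ℓ => (exists_kstar p hcard ℓ.1 ℓ.2).choose with hkf
  have hkmem : ∀ ℓ : Fin n, kf ℓ ∈ chainK (Fin n) p ℓ.1 \ chainK (Fin n) p (ℓ.1 + 1) := by
    intro ℓ
    have h := (exists_kstar p hcard ℓ.1 ℓ.2).choose_spec
    have gen : ∀ (s : Set (Fin n)) (k : Fin n), s = {k} → k ∈ s := by
      rintro s k rfl; exact Set.mem_singleton _
    exact gen _ _ h
  have hinj : Function.Injective kf := by
    intro a b hab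
    by_contra hne
    rcases Fin.lt_or_lt_of_ne hne with h | h
    · have h1 : kf b ∈ chainK (Fin n) p (a.1 + 1) :=
        chainK_subset_of_le p (by exact h) (hkmem b).1
      rw [← hab] at h1
      exact (hkmem a).2 h1
    · have h1 : kf a ∈ chainK (Fin n) p (b.1 + 1) :=
        chainK_subset_of_le p (by exact h) (hkmem a).1
      rw [hab] at h1
      exact (hkmem b).2 h1
  set u : Equiv.Perm (Fin n) :=
    Equiv.ofBijective kf (Finite.injective_iff_bijective.mp hinj) with hu
  have hu_apply : ∀ ℓ, u ℓ = kf ℓ := fun ℓ => rfl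
  refine ⟨u, ?_⟩
  funext I
  obtain ⟨ℓ, hℓn, k, hdiff, hkI, hsubI, hnsubI, hpI⟩ := component_single_of_card p hp hcard I
  have hkkf : k = kf ⟨ℓ, hℓn⟩ := by
    have h1 := hkmem ⟨ℓ, hℓn⟩
    rw [hdiff] at h1
    exact h1.symm
  have huinv : u⁻¹ k = ⟨ℓ, hℓn⟩ := by
    rw [hkkf, ← hu_apply]
    simp
  have hmin : k = minElt u I := by
    refine minElt_unique u I hkI ?_
    intro i hi
    rw [huinv]
    by_contra hlt
    push_neg at hlt
    have hib : i = kf (u⁻¹ i) := by rw [← hu_apply]; simp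
    have h2 : i ∉ chainK (Fin n) p ((u⁻¹ i).1 + 1) := by
      have h2' := (hkmem (u⁻¹ i)).2
      rwa [← hib] at h2'
    have h3 : i ∈ chainK (Fin n) p ((u⁻¹ i).1 + 1) :=
      chainK_subset_of_le p (by exact hlt) (hsubI hi)
    exact h2 h3
  rw [hpI]
  simp only [stdPoint]
  refine mk_eq_mk_of_unit _ _ 1 ?_
  rw [one_smul, hmin]

end Perm

/-- The symmetric group action on `P_n` (the `w(I)`-component of `w·p` being
`[a^I_{w⁻¹(j)}]_{j ∈ w(I)}`) preserves `Y_n`; a point `p ∈ Y_n` is fixed by the torus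
action if and only if its chain is a complete flag (i.e. `|K_{ℓ+1}| = n - ℓ` for all
`0 ≤ ℓ ≤ n`, so `m = n`); and the symmetric group acts simply transitively on the set of
torus-fixed points of `Y_n`, so that there are exactly `n!` of them. -/
theorem stmt8 (n : ℕ) (hn : 1 ≤ n) :
    (∀ w : Equiv.Perm (Fin n), ∀ p ∈ Yn (Fin n), permAct (Fin n) w p ∈ Yn (Fin n)) ∧
    (∀ p ∈ Yn (Fin n),
      ((∀ t : ↥(torusSet (Fin n)), act (Fin n) t p = p) ↔
        (∀ ℓ ≤ n, (chainK (Fin n) p ℓ).ncard = n - ℓ))) ∧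
    (∀ p ∈ Yn (Fin n), ∀ q ∈ Yn (Fin n),
      (∀ t : ↥(torusSet (Fin n)), act (Fin n) t p = p) →
      (∀ t : ↥(torusSet (Fin n)), act (Fin n) t q = q) →
      ∃! w : Equiv.Perm (Fin n), permAct (Fin n) w p = q) ∧
    {p ∈ Yn (Fin n) | ∀ t : ↥(torusSet (Fin n)), act (Fin n) t p = p}.ncard =
      Nat.factorial n := by
  have hn0 : 0 < n := hn
  refine ⟨fun w p hp => permAct_preserves_Yn w p hp, ?_, ?_, ?_⟩
  · intro p hp
    constructor
    · exact chainK_card_of_fixed p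
    · intro hcard
      refine act_fixed p ?_ 
      intro I
      obtain ⟨ℓ, _, k, _, hkI, _, _, hpI⟩ := component_single_of_card p hp hcard I
      exact ⟨k, hkI, hpI⟩
  · intro p hp q hq hfp hfq
    obtain ⟨u, rfl⟩ := fixed_eq_stdPoint p hp (chainK_card_of_fixed p hfp)
    obtain ⟨u', rfl⟩ := fixed_eq_stdPoint q hq (chainK_card_of_fixed q hfq)
    refine ⟨u' * u⁻¹, ?_, ?_⟩
    · show permAct (Fin n) (u' * u⁻¹) (stdPoint u) = stdPoint u'
      rw [permAct_stdPoint]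
      group
    · intro w hw
      rw [permAct_stdPoint] at hw
      have h := stdPoint_injective hw
      rw [← h]
      group
  · have hset : {p ∈ Yn (Fin n) | ∀ t : ↥(torusSet (Fin n)), act (Fin n) t p = p} =
        Set.range (stdPoint (n := n)) := by
      ext p
      constructor
      · rintro ⟨hp, hfix⟩
        obtain ⟨u, rfl⟩ := fixed_eq_stdPoint p hp (chainK_card_of_fixed p hfix)
        exact ⟨u, rfl⟩
      · rintro ⟨u, rfl⟩
        exact ⟨stdPoint_mem_Yn hn0 u, stdPoint_fixed u⟩
    rw [hset, ← Nat.card_coe_set_eq, Nat.card_range_of_injective stdPoint_injective,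
      Nat.card_eq_fintype_card, Fintype.card_perm, Fintype.card_fin]
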